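/- Summing the Laplace distribution formula yields the tail identity: P_1(τ_{0,N} > n) = (2/N)[S_0(N, m_N, n) + S_0(N, m_N, n+1)], where S_0(N,m,n) = Σ_{k=1}^m cos^n(π(2k−1)/N) and m_N = ⌈(N−1)/2⌉. -/

import Mathlib

open MeasureTheory ProbabilityTheory Real
open scoped ENNReal



lemma cot_half_sin (θ : ℝ) (h : Real.sin (θ/2) ≠ 0) :
    Real.cos (θ/2) / Real.sin (θ/2) * Real.sin θ = 1 + Real.cos θ := by
  have hs : Real.sin θ = 2 * Real.sin (θ/2) * Real.cos (θ/2) := by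
    rw [← Real.sin_two_mul]; ring_nf
  have hc : 1 + Real.cos θ = 2 * Real.cos (θ/2)^2 := by
    have h2 : Real.cos θ = Real.cos (2*(θ/2)) := by ring_nf
    rw [h2, Real.cos_two_mul]; ring
  rw [hs, hc]; field_simp

lemma key_diff (θ : ℝ) (h : Real.sin (θ/2) ≠ 0) (a : ℝ) :
    Real.cos (θ/2)/Real.sin (θ/2) * (Real.sin ((a+1)*θ) - Real.sin (a*θ))
      = Real.cos ((a+1)*θ) + Real.cos (a*θ) := by
  rw [Real.sin_sub_sin, Real.cos_add_cos]
  rw [show ((a+1)*θ - a*θ)/2 = θ/2 by ring]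
  field_simp

lemma cot_expand (θ : ℝ) (h : Real.sin (θ/2) ≠ 0) : ∀ x : ℕ,
    Real.cos (θ/2)/Real.sin (θ/2) * Real.sin (((x:ℝ)+1)*θ)
      = 1 + Real.cos (((x:ℝ)+1)*θ) + 2*∑ j ∈ Finset.Icc 1 x, Real.cos ((j:ℝ)*θ) := by
  intro x
  induction x with
  | zero => simp [cot_half_sin θ h]
  | succ x ih =>
    rw [Finset.sum_Icc_succ_top (by omega : 1 ≤ x+1)]
    have hd := key_diff θ h ((x:ℝ)+1)
    push_cast
    push_cast at ih hd
    nlinarith [ih, hd]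

lemma cos_geom (α : ℝ) (h : Real.sin α ≠ 0) : ∀ m : ℕ,
    ∑ k ∈ Finset.Icc 1 m, Real.cos ((2*(k:ℝ)-1)*α)
      = Real.sin (2*(m:ℝ)*α)/(2*Real.sin α) := by
  intro m
  induction m with
  | zero => simp
  | succ m ih =>
    rw [Finset.sum_Icc_succ_top (by omega : 1 ≤ m+1), ih]
    have hd : Real.sin (2*((m:ℝ)+1)*α) - Real.sin (2*(m:ℝ)*α)
        = 2 * Real.sin α * Real.cos ((2*((m:ℝ)+1)-1)*α) := by
      rw [Real.sin_sub_sin]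
      rw [show (2*((m:ℝ)+1)*α - 2*(m:ℝ)*α)/2 = α by ring]
      rw [show (2*((m:ℝ)+1)*α + 2*(m:ℝ)*α)/2 = (2*((m:ℝ)+1)-1)*α by ring]
    push_cast
    push_cast at hd
    field_simp
    ring_nf at hd ⊢
    linarith [hd]

lemma Cval (N j : ℕ) (hN : 2 ≤ N) (hj1 : 1 ≤ j) (hj2 : j ≤ N - 1) :
    ∑ k ∈ Finset.Icc 1 (N/2), Real.cos ((j:ℝ)*(π*(2*(k:ℝ)-1)/N))
      = if Even N then 0 else (-1:ℝ)^(j+1)/2 := by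
  have hNpos : (0:ℝ) < N := by positivity
  have hjN : (j:ℝ) ≤ (N:ℝ) - 1 := by
    have : (j:ℝ) ≤ ((N-1 : ℕ):ℝ) := by exact_mod_cast hj2
    rw [Nat.cast_sub (by omega)] at this; exact_mod_cast this
  have hj1' : (1:ℝ) ≤ (j:ℝ) := by exact_mod_cast hj1
  set α := π * j / N with hα
  have hsin : 0 < Real.sin α := by
    apply Real.sin_pos_of_pos_of_lt_pi
    · rw [hα]; positivity
    · rw [hα, div_lt_iff₀ hNpos]
      nlinarith [Real.pi_pos]
  have hre : ∀ k ∈ Finset.Icc 1 (N/2),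
      Real.cos ((j:ℝ)*(π*(2*(k:ℝ)-1)/N)) = Real.cos ((2*(k:ℝ)-1)*α) := by
    intro k _; congr 1; rw [hα]; field_simp
  rw [Finset.sum_congr rfl hre, cos_geom α hsin.ne']
  rcases Nat.even_or_odd N with he | ho
  · rw [if_pos he]
    have h2 : (2*((N/2 : ℕ):ℝ)) = (N:ℝ) := by
      exact_mod_cast congrArg (Nat.cast : ℕ → ℝ) (Nat.two_mul_div_two_of_even he)
    rw [h2, show (N:ℝ)*α = (j:ℝ)*π by rw [hα]; field_simp, Real.sin_nat_mul_pi]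
    simp
  · rw [if_neg (Nat.not_even_iff_odd.mpr ho)]
    have h2 : (2*((N/2 : ℕ):ℝ)) = (N:ℝ) - 1 := by
      obtain ⟨t, ht⟩ := ho
      have : 2*(N/2) = N - 1 := by omega
      have := congrArg (Nat.cast : ℕ → ℝ) this
      push_cast [Nat.cast_sub (by omega : 1 ≤ N)] at this
      linarith
    rw [h2, show ((N:ℝ)-1)*α = (j:ℝ)*π - α by rw [hα]; field_simp,
      Real.sin_nat_mul_pi_sub]
    rw [pow_succ]
    field_simp

lemma sin_half_theta_pos (N k : ℕ) (hN : 2 ≤ N) (hk1 : 1 ≤ k) (hk2 : 2*k ≤ N) :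
    0 < Real.sin (π * (2*(k:ℝ)-1)/N/2) := by
  have hNpos : (0:ℝ) < N := by positivity
  have h1 : (1:ℝ) ≤ 2*(k:ℝ)-1 := by
    have : (1:ℝ) ≤ (k:ℝ) := by exact_mod_cast hk1
    linarith
  have h2 : 2*(k:ℝ)-1 ≤ (N:ℝ) - 1 := by
    have : 2*(k:ℝ) ≤ (N:ℝ) := by exact_mod_cast hk2
    linarith
  apply Real.sin_pos_of_pos_of_lt_pi
  · positivity
  · have hπ : 0 < π := Real.pi_pos
    rw [div_lt_iff₀ (by norm_num : (0:ℝ) < 2), div_lt_iff₀ hNpos]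
    nlinarith

noncomputable def Ffun (N n : ℕ) (x : ℝ) : ℝ :=
  (2/N) * ∑ k ∈ Finset.Icc 1 (N/2),
    (Real.cos (π*(2*(k:ℝ)-1)/N/2)/Real.sin (π*(2*(k:ℝ)-1)/N/2)) *
      Real.sin (x*(π*(2*(k:ℝ)-1)/N)) * Real.cos (π*(2*(k:ℝ)-1)/N) ^ n

lemma Ffun_zero (N n : ℕ) : Ffun N n 0 = 0 := by
  simp [Ffun]

lemma Ffun_N (N n : ℕ) (hN : 2 ≤ N) : Ffun N n (N:ℝ) = 0 := by
  have hNpos : (0:ℝ) < N := by positivity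
  rw [Ffun]
  rw [Finset.sum_congr rfl (fun k hk => ?_), Finset.sum_const, smul_zero, mul_zero]
  rw [Finset.mem_Icc] at hk
  have : (N:ℝ)*(π*(2*(k:ℝ)-1)/N) = ((2*k-1 : ℕ):ℝ)*π := by
    push_cast [Nat.cast_sub (by omega : 1 ≤ 2*k)]
    field_simp
  rw [this, Real.sin_nat_mul_pi, mul_zero, zero_mul]

lemma Ffun_step (N n : ℕ) (x : ℝ) :
    Ffun N (n+1) x = (Ffun N n (x-1) + Ffun N n (x+1))/2 := by
  rw [Ffun, Ffun, Ffun, ← mul_add, ← Finset.sum_add_distrib, mul_div_assoc]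
  congr 1
  rw [Finset.sum_div]
  apply Finset.sum_congr rfl
  intro k _
  set θ := π*(2*(k:ℝ)-1)/N with hθ
  have hsum : Real.sin ((x-1)*θ) + Real.sin ((x+1)*θ) = 2*Real.sin (x*θ)*Real.cos θ := by
    rw [show (x-1)*θ = x*θ - θ by ring, show (x+1)*θ = x*θ + θ by ring,
      Real.sin_sub, Real.sin_add]
    ring
  rw [pow_succ, eq_div_iff (by norm_num : (2:ℝ) ≠ 0)]
  linear_combination (-(Real.cos (θ/2)/Real.sin (θ/2)) * Real.cos θ ^ n) * hsum

lemma sum_neg_one_pow_half : ∀ m : ℕ, ∑ j ∈ Finset.Icc 1 m, ((-1:ℝ))^(j+1)/2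
    = if Even m then 0 else 1/2 := by
  intro m
  induction m with
  | zero => simp
  | succ m ih =>
    rw [Finset.sum_Icc_succ_top (by omega : 1 ≤ m+1), ih]
    rcases Nat.even_or_odd m with hm | hm
    · rw [if_pos hm, if_neg (by simp [Nat.even_add_one, hm]),
        Even.neg_one_pow (hm.add (by norm_num : Even 2))]
      norm_num
    · rw [if_neg (Nat.not_even_iff_odd.mpr hm),
        if_pos (by simpa [Nat.even_add_one, parity_simps] using hm),
        Odd.neg_one_pow (hm.add_even (by norm_num : Even 2))]
      norm_num

lemma Ffun_base (N : ℕ) (hN : 2 ≤ N) (x : ℕ) (hx1 : 1 ≤ x) (hx2 : x ≤ N - 1) :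
    Ffun N 0 (x:ℝ) = 1 := by
  have hNpos : (0:ℝ) < N := by positivity
  rw [Ffun]
  have hexp : ∀ k ∈ Finset.Icc 1 (N/2),
      (Real.cos (π*(2*(k:ℝ)-1)/N/2)/Real.sin (π*(2*(k:ℝ)-1)/N/2)) *
        Real.sin ((x:ℝ)*(π*(2*(k:ℝ)-1)/N)) * Real.cos (π*(2*(k:ℝ)-1)/N) ^ 0
      = 1 + Real.cos ((x:ℝ)*(π*(2*(k:ℝ)-1)/N))
          + 2*∑ j ∈ Finset.Icc 1 (x-1), Real.cos ((j:ℝ)*(π*(2*(k:ℝ)-1)/N)) := by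
    intro k hk
    rw [Finset.mem_Icc] at hk
    have hsin := sin_half_theta_pos N k hN hk.1 (by omega)
    have h := cot_expand (π*(2*(k:ℝ)-1)/N) hsin.ne' (x-1)
    have hc : ((x-1 : ℕ):ℝ) + 1 = (x:ℝ) := by
      push_cast [Nat.cast_sub hx1]; ring
    rw [hc] at h
    rw [pow_zero, mul_one]
    exact h
  rw [Finset.sum_congr rfl hexp]
  rw [Finset.sum_add_distrib, Finset.sum_add_distrib, Finset.sum_const, nsmul_eq_mul,
    mul_one, Nat.card_Icc, ← Finset.mul_sum, Finset.sum_comm]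
  have hCx := Cval N x hN hx1 hx2
  have hCj : ∀ j ∈ Finset.Icc 1 (x-1),
      ∑ k ∈ Finset.Icc 1 (N/2), Real.cos ((j:ℝ)*(π*(2*(k:ℝ)-1)/N))
        = if Even N then 0 else (-1:ℝ)^(j+1)/2 := by
    intro j hj
    rw [Finset.mem_Icc] at hj
    exact Cval N j hN hj.1 (by omega)
  rw [hCx, Finset.sum_congr rfl hCj, Nat.add_sub_cancel]
  rcases Nat.even_or_odd N with he | ho
  · simp only [if_pos he, Finset.sum_const_zero, mul_zero, add_zero]
    have h2 : (2*((N/2 : ℕ):ℝ)) = (N:ℝ) := by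
      exact_mod_cast congrArg (Nat.cast : ℕ → ℝ) (Nat.two_mul_div_two_of_even he)
    field_simp
    linarith
  · simp only [if_neg (Nat.not_even_iff_odd.mpr ho)]
    have h2 : (2*((N/2 : ℕ):ℝ)) = (N:ℝ) - 1 := by
      obtain ⟨t, ht⟩ := ho
      have h3 : 2*(N/2) = N - 1 := by omega
      have := congrArg (Nat.cast : ℕ → ℝ) h3
      push_cast [Nat.cast_sub (by omega : 1 ≤ N)] at this
      linarith
    rw [sum_neg_one_pow_half]
    rcases Nat.even_or_odd x with hx | hx
    · rw [if_neg (by simpa [Nat.even_sub hx1, parity_simps] using hx),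
        Odd.neg_one_pow (by simpa [parity_simps] using hx)]
      field_simp
      linarith
    · rw [if_pos (by simpa [Nat.even_sub hx1, parity_simps] using hx),
        Even.neg_one_pow (by simpa [parity_simps] using hx)]
      field_simp
      linarith

/-- Number of ±1 paths of length `n` starting at `x` avoiding `{0,N}` at all
times `0..n` (first-step recursion). -/
def wc (N : ℕ) : ℕ → ℤ → ℕ
  | 0, x => if x = 0 ∨ x = (N : ℤ) then 0 else 1
  | n+1, x => if x = 0 ∨ x = (N : ℤ) then 0 else wc N n (x - 1) + wc N n (x + 1)

section AuxProb
variable {Ω : Type*} [MeasurableSpace Ω]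


lemma event_meas (X : ℕ → Ω → ℤ) (hmeas : ∀ i, Measurable (X i)) (N : ℕ)
    (m s : ℕ) (x : ℤ) :
    MeasurableSet {ω | ∀ k ≤ m, (x + ∑ i ∈ Finset.range k, X (s + i) ω) ≠ 0 ∧
        (x + ∑ i ∈ Finset.range k, X (s + i) ω) ≠ (N : ℤ)} := by
  have : {ω | ∀ k ≤ m, (x + ∑ i ∈ Finset.range k, X (s + i) ω) ≠ 0 ∧
        (x + ∑ i ∈ Finset.range k, X (s + i) ω) ≠ (N : ℤ)}
      = ⋂ k ∈ Set.Iic m,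
        ((fun ω => x + ∑ i ∈ Finset.range k, X (s + i) ω) ⁻¹' ({0, (N:ℤ)}ᶜ)) := by
    ext ω
    simp [Set.mem_iInter, Set.mem_preimage, Set.mem_compl_iff]
  rw [this]
  apply MeasurableSet.biInter (Set.to_countable _)
  intro k _
  have hg : Measurable fun ω => x + ∑ i ∈ Finset.range k, X (s + i) ω := by
    apply Measurable.const_add
    exact Finset.measurable_sum _ (fun i _ => hmeas (s + i))
  exact hg (((measurableSet_singleton 0).union (measurableSet_singleton _)).compl)

lemma indep_half (P : Measure Ω) [IsProbabilityMeasure P]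
    (X : ℕ → Ω → ℤ) (hmeas : ∀ i, Measurable (X i))
    (hindep : iIndepFun X P)
    (N : ℕ) (n s : ℕ) (y : ℤ) (c : ℤ) :
    P ({ω | ∀ k ≤ n, (y + ∑ i ∈ Finset.range k, X (s + 1 + i) ω) ≠ 0 ∧
          (y + ∑ i ∈ Finset.range k, X (s + 1 + i) ω) ≠ (N : ℤ)} ∩ {ω | X s ω = c})
      = P {ω | ∀ k ≤ n, (y + ∑ i ∈ Finset.range k, X (s + 1 + i) ω) ≠ 0 ∧
          (y + ∑ i ∈ Finset.range k, X (s + 1 + i) ω) ≠ (N : ℤ)} * P {ω | X s ω = c} := by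
  classical
  set T : Finset ℕ := (Finset.range n).image (fun i => s + 1 + i) with hT
  have hdisj : Disjoint T ({s} : Finset ℕ) := by
    simp only [Finset.disjoint_left, hT, Finset.mem_image, Finset.mem_range,
      Finset.mem_singleton]
    rintro a ⟨i, _, rfl⟩
    omega
  have hbase := hindep.indepFun_finset T {s} hdisj hmeas
  set φ : ((i : T) → ℤ) → (Fin n → ℤ) :=
    fun v j => v ⟨s + 1 + (j : ℕ), Finset.mem_image.mpr ⟨j, Finset.mem_range.mpr j.2, rfl⟩⟩
    with hφdef
  set ψ : ((i : ({s} : Finset ℕ)) → ℤ) → ℤ := fun v => v ⟨s, Finset.mem_singleton_self s⟩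
  have hφ : Measurable φ := measurable_pi_lambda _ (fun j => measurable_pi_apply _)
  have hψ : Measurable ψ := measurable_pi_apply _
  have h2 : IndepFun (fun ω (j : Fin n) => X (s + 1 + (j : ℕ)) ω) (X s) P :=
    hbase.comp hφ hψ
  set B : Set (Fin n → ℤ) := {v | ∀ k ≤ n,
      (y + ∑ j : Fin n, if (j : ℕ) < k then v j else 0) ≠ 0 ∧
      (y + ∑ j : Fin n, if (j : ℕ) < k then v j else 0) ≠ (N : ℤ)} with hBdef
  have hB : MeasurableSet B := by
    have : B = ⋂ k ∈ Set.Iic n,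
        ((fun v : Fin n → ℤ => y + ∑ j : Fin n, if (j : ℕ) < k then v j else 0) ⁻¹'
          ({0, (N:ℤ)}ᶜ)) := by
      ext v
      simp [hBdef, Set.mem_iInter, Set.mem_preimage, Set.mem_compl_iff]
    rw [this]
    apply MeasurableSet.biInter (Set.to_countable _)
    intro k _
    have hg : Measurable fun v : Fin n → ℤ =>
        y + ∑ j : Fin n, if (j : ℕ) < k then v j else 0 := by
      apply Measurable.const_add
      apply Finset.measurable_sum
      intro j _
      by_cases hj : (j : ℕ) < k
      · simpa [hj] using measurable_pi_apply j
      · simpa [hj] using (measurable_const : Measurable fun _ : Fin n → ℤ => (0:ℤ))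
    exact hg (((measurableSet_singleton 0).union (measurableSet_singleton _)).compl)
  have hsum : ∀ (k : ℕ), k ≤ n → ∀ ω,
      (∑ j : Fin n, if (j : ℕ) < k then X (s + 1 + (j : ℕ)) ω else 0)
        = ∑ i ∈ Finset.range k, X (s + 1 + i) ω := by
    intro k hk ω
    rw [Fin.sum_univ_eq_sum_range (fun i => if i < k then X (s + 1 + i) ω else 0) n]
    rw [← Finset.sum_filter]
    congr 1
    ext i
    simp only [Finset.mem_filter, Finset.mem_range]
    omega
  have hE1 : {ω | ∀ k ≤ n, (y + ∑ i ∈ Finset.range k, X (s + 1 + i) ω) ≠ 0 ∧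
        (y + ∑ i ∈ Finset.range k, X (s + 1 + i) ω) ≠ (N : ℤ)}
      = (fun ω (j : Fin n) => X (s + 1 + (j : ℕ)) ω) ⁻¹' B := by
    ext ω
    simp only [Set.mem_setOf_eq, Set.mem_preimage, hBdef]
    constructor
    · intro h k hk
      rw [hsum k hk ω]
      exact h k hk
    · intro h k hk
      rw [← hsum k hk ω]
      exact h k hk
  have hXs : {ω | X s ω = c} = X s ⁻¹' {c} := rfl
  rw [hE1, hXs]
  exact h2.measure_inter_preimage_eq_mul B {c} hB (measurableSet_singleton c)

lemma ennreal_half_pow (n : ℕ) (a : ℝ≥0∞) : a / 2^n * (1/2) = a / 2^(n+1) := by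
  have h : ((2:ℝ≥0∞)^(n+1))⁻¹ = ((2:ℝ≥0∞)^n)⁻¹ * 2⁻¹ := by
    rw [pow_succ]
    exact ENNReal.mul_inv (Or.inl (by positivity)) (Or.inr two_ne_zero)
  rw [div_eq_mul_inv a, div_eq_mul_inv a, h, one_div, mul_assoc]

lemma walk_prob (P : Measure Ω) [IsProbabilityMeasure P]
    (X : ℕ → Ω → ℤ) (hmeas : ∀ i, Measurable (X i))
    (hindep : iIndepFun X P)
    (hup : ∀ i, P {ω | X i ω = 1} = 1/2)
    (hdown : ∀ i, P {ω | X i ω = -1} = 1/2)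
    (N : ℕ) :
    ∀ (n s : ℕ) (x : ℤ),
      P {ω | ∀ k ≤ n, (x + ∑ i ∈ Finset.range k, X (s + i) ω) ≠ 0 ∧
          (x + ∑ i ∈ Finset.range k, X (s + i) ω) ≠ (N : ℤ)}
        = (wc N n x : ℝ≥0∞) / 2 ^ n := by
  intro n
  induction n with
  | zero =>
    intro s x
    by_cases hb : x = 0 ∨ x = (N : ℤ)
    · have hempty : {ω : Ω | ∀ k ≤ 0, (x + ∑ i ∈ Finset.range k, X (s + i) ω) ≠ 0 ∧
          (x + ∑ i ∈ Finset.range k, X (s + i) ω) ≠ (N : ℤ)} = ∅ := by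
        ext ω
        simp only [Set.mem_setOf_eq, Set.mem_empty_iff_false, iff_false, not_forall]
        refine ⟨0, by simp, ?_⟩
        simp only [Finset.range_zero, Finset.sum_empty, add_zero]
        tauto
      rw [hempty, show wc N 0 x = 0 from by rw [wc, if_pos hb]]
      simp
    · push_neg at hb
      have huniv : {ω : Ω | ∀ k ≤ 0, (x + ∑ i ∈ Finset.range k, X (s + i) ω) ≠ 0 ∧
          (x + ∑ i ∈ Finset.range k, X (s + i) ω) ≠ (N : ℤ)} = Set.univ := by
        ext ω
        simp only [Set.mem_setOf_eq, Set.mem_univ, iff_true]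
        intro k hk
        rw [Nat.le_zero] at hk
        subst hk
        simpa using hb
      rw [huniv, show wc N 0 x = 1 from by rw [wc, if_neg (by tauto)]]
      simp
  | succ n ih =>
    intro s x
    by_cases hb : x = 0 ∨ x = (N : ℤ)
    · have hempty : {ω : Ω | ∀ k ≤ n+1, (x + ∑ i ∈ Finset.range k, X (s + i) ω) ≠ 0 ∧
          (x + ∑ i ∈ Finset.range k, X (s + i) ω) ≠ (N : ℤ)} = ∅ := by
        ext ω
        simp only [Set.mem_setOf_eq, Set.mem_empty_iff_false, iff_false, not_forall]
        refine ⟨0, by simp, ?_⟩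
        simp only [Finset.range_zero, Finset.sum_empty, add_zero]
        tauto
      rw [hempty, show wc N (n+1) x = 0 from by rw [wc, if_pos hb]]
      simp
    · push_neg at hb
      set E := {ω : Ω | ∀ k ≤ n+1, (x + ∑ i ∈ Finset.range k, X (s + i) ω) ≠ 0 ∧
          (x + ∑ i ∈ Finset.range k, X (s + i) ω) ≠ (N : ℤ)} with hEdef
      set A1 := {ω : Ω | X s ω = 1} with hA1def
      set A2 := {ω : Ω | X s ω = -1} with hA2def
      set E1 := {ω : Ω | ∀ k ≤ n, ((x+1) + ∑ i ∈ Finset.range k, X (s + 1 + i) ω) ≠ 0 ∧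
          ((x+1) + ∑ i ∈ Finset.range k, X (s + 1 + i) ω) ≠ (N : ℤ)} with hE1def
      set E2 := {ω : Ω | ∀ k ≤ n, ((x-1) + ∑ i ∈ Finset.range k, X (s + 1 + i) ω) ≠ 0 ∧
          ((x-1) + ∑ i ∈ Finset.range k, X (s + 1 + i) ω) ≠ (N : ℤ)} with hE2def
      have hreidx : ∀ (ω : Ω) (k : ℕ),
          ∑ i ∈ Finset.range (k+1), X (s + i) ω
            = X s ω + ∑ i ∈ Finset.range k, X (s + 1 + i) ω := by
        intro ω k
        have h2 : (∑ i ∈ Finset.range k, X (s + (i+1)) ω)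
            = ∑ i ∈ Finset.range k, X (s + 1 + i) ω :=
          Finset.sum_congr rfl (fun i _ => by rw [show s + (i+1) = s + 1 + i from by omega])
        rw [Finset.sum_range_succ', h2, add_comm]
        norm_num
      have claim : ∀ (c : ℤ) (y : ℤ), x + c = y →
          (E ∩ {ω | X s ω = c}) =
          ({ω : Ω | ∀ k ≤ n, (y + ∑ i ∈ Finset.range k, X (s + 1 + i) ω) ≠ 0 ∧
            (y + ∑ i ∈ Finset.range k, X (s + 1 + i) ω) ≠ (N : ℤ)} ∩ {ω | X s ω = c}) := by
        intro c y hcy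
        have harr : ∀ S : ℤ, x + (c + S) = y + S := fun S => by rw [← hcy]; ring
        ext ω
        simp only [Set.mem_inter_iff, Set.mem_setOf_eq, hEdef]
        constructor
        · rintro ⟨hEω, hA⟩
          refine ⟨?_, hA⟩
          intro k hk
          have h := hEω (k+1) (by omega)
          rw [hreidx ω k, hA, harr] at h
          exact h
        · rintro ⟨hE1ω, hA⟩
          refine ⟨?_, hA⟩
          intro k hk
          cases k with
          | zero => simpa using hb
          | succ k =>
            rw [hreidx ω k, hA, harr]
            exact hE1ω k (by omega)
      have hA1m : MeasurableSet A1 := hmeas s (measurableSet_singleton 1)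
      have hA2m : MeasurableSet A2 := hmeas s (measurableSet_singleton (-1))
      have hEm : MeasurableSet E := event_meas X hmeas N (n+1) s x
      have hA12 : Disjoint A1 A2 := by
        rw [Set.disjoint_left]
        intro ω h1 h2
        rw [hA1def] at h1; rw [hA2def] at h2
        simp only [Set.mem_setOf_eq] at h1 h2
        omega
      have hcover : P (A1 ∪ A2) = 1 := by
        rw [measure_union hA12 hA2m, hup s, hdown s, ENNReal.div_add_div_same,
          one_add_one_eq_two]
        exact ENNReal.div_self two_ne_zero ENNReal.ofNat_ne_top
      have hnull : P (E ∩ (A1 ∪ A2)ᶜ) = 0 :=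
        measure_mono_null Set.inter_subset_right
          ((prob_compl_eq_zero_iff (hA1m.union hA2m)).mpr hcover)
      have hsplit : P E = P (E ∩ A1) + P (E ∩ A2) := by
        have hiad := measure_inter_add_diff (μ := P) E (hA1m.union hA2m)
        have hdiff : P (E \ (A1 ∪ A2)) = 0 := by
          rw [Set.diff_eq]
          exact hnull
        rw [hdiff, add_zero] at hiad
        rw [← hiad, Set.inter_union_distrib_left,
          measure_union (hA12.mono Set.inter_subset_right Set.inter_subset_right)
            (hEm.inter hA2m)]
      rw [hsplit, claim 1 (x+1) rfl, claim (-1) (x-1) (by ring)]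
      rw [indep_half P X hmeas hindep N n s (x+1) 1,
        indep_half P X hmeas hindep N n s (x-1) (-1)]
      rw [hup s, hdown s, ih (s+1) (x+1), ih (s+1) (x-1)]
      rw [show wc N (n+1) x = wc N n (x-1) + wc N n (x+1) from by
        rw [wc, if_neg (by tauto)]]
      rw [ennreal_half_pow n _, ennreal_half_pow n _, Nat.cast_add, ENNReal.add_div]
      ring

end AuxProb

lemma wc_formula (N : ℕ) (hN : 2 ≤ N) :
    ∀ (n : ℕ) (x : ℤ), 0 ≤ x → x ≤ (N : ℤ) →
      (wc N n x : ℝ) = 2 ^ n * Ffun N n (x:ℝ) := by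
  intro n
  induction n with
  | zero =>
    intro x hx0 hxN
    by_cases hb : x = 0 ∨ x = (N:ℤ)
    · rw [show wc N 0 x = 0 by rw [wc, if_pos hb]]
      rcases hb with h | h
      · subst h; simp [Ffun_zero]
      · subst h; push_cast; rw [Ffun_N N 0 hN]; simp
    · push_neg at hb
      rw [show wc N 0 x = 1 by rw [wc, if_neg (by tauto)]]
      have hx : (x:ℝ) = ((x.toNat : ℕ) : ℝ) := by
        exact_mod_cast (Int.toNat_of_nonneg hx0).symm
      rw [hx, Ffun_base N hN x.toNat (by omega) (by omega)]
      norm_num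
  | succ n ih =>
    intro x hx0 hxN
    by_cases hb : x = 0 ∨ x = (N:ℤ)
    · rw [show wc N (n+1) x = 0 by rw [wc, if_pos hb]]
      rcases hb with h | h
      · subst h; simp [Ffun_zero]
      · subst h; push_cast; rw [Ffun_N N (n+1) hN]; simp
    · push_neg at hb
      rw [show wc N (n+1) x = wc N n (x-1) + wc N n (x+1) by rw [wc, if_neg (by tauto)]]
      push_cast
      rw [ih (x-1) (by omega) (by omega), ih (x+1) (by omega) (by omega)]
      have hst := Ffun_step N n (x:ℝ)
      push_cast at hst ⊢
      rw [hst]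
      ring

theorem stmt_6
    {Ω : Type*} [MeasurableSpace Ω] (P : Measure Ω) [IsProbabilityMeasure P]
    (X : ℕ → Ω → ℤ) (hmeas : ∀ i, Measurable (X i))
    (hindep : iIndepFun X P)
    (hup : ∀ i, P {ω | X i ω = 1} = 1/2)
    (hdown : ∀ i, P {ω | X i ω = -1} = 1/2)
    (N : ℕ) (hN : 2 ≤ N)
    (S : ℕ → Ω → ℤ) (hS : ∀ n ω, S n ω = 1 + ∑ i ∈ Finset.range n, X i ω)
    (S₀ : ℕ → ℕ → ℝ)
    (hS₀ : ∀ m n, S₀ m n = ∑ k ∈ Finset.Icc 1 m, Real.cos (π * (2 * k - 1) / N) ^ n)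
    (n : ℕ) :
    (P {ω | ∀ k ≤ n, S k ω ≠ 0 ∧ S k ω ≠ (N : ℤ)}).toReal
      = (2 / N) * (S₀ (N / 2) n + S₀ (N / 2) (n + 1)) := by
  have hset : {ω | ∀ k ≤ n, S k ω ≠ 0 ∧ S k ω ≠ (N : ℤ)}
      = {ω | ∀ k ≤ n, ((1 : ℤ) + ∑ i ∈ Finset.range k, X (0 + i) ω) ≠ 0 ∧
          ((1 : ℤ) + ∑ i ∈ Finset.range k, X (0 + i) ω) ≠ (N : ℤ)} := by
    ext ω; simp [hS, Nat.zero_add]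
  rw [hset, walk_prob P X hmeas hindep hup hdown N n 0 1]
  have h2 : ((2 : ℝ≥0∞) ^ n) ≠ 0 := by positivity
  have h2' : ((2 : ℝ≥0∞) ^ n) ≠ ⊤ := ENNReal.pow_ne_top ENNReal.ofNat_ne_top
  rw [ENNReal.toReal_div]
  have : ((wc N n 1 : ℝ≥0∞)).toReal = (wc N n 1 : ℝ) := by simp
  rw [this]
  have h2r : ((2 : ℝ≥0∞) ^ n).toReal = (2 : ℝ) ^ n := by simp
  rw [h2r]
  have key := wc_formula N hN n 1 (by norm_num) (by exact_mod_cast Nat.one_le_iff_ne_zero.mpr (by omega : N ≠ 0))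
  simp only [Int.cast_one] at key
  rw [key, hS₀, hS₀]
  have h2n : (2:ℝ)^n ≠ 0 := by positivity
  rw [mul_comm ((2:ℝ)^n), mul_div_assoc, div_self h2n, mul_one]
  simp only [Ffun]
  rw [← Finset.sum_add_distrib]
  congr 1
  apply Finset.sum_congr rfl
  intro k hk
  rw [Finset.mem_Icc] at hk
  have hk2 : 2*k ≤ N := by omega
  have hsin := sin_half_theta_pos N k hN hk.1 hk2
  rw [one_mul, cot_half_sin _ hsin.ne']
  ring
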